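/- Every (c, λ, w)-structure in a tournament T contains a smooth (c/2, 4kλ, w)-structure, where k = |w|: more precisely, if (A_1,...,A_k) is a sequence of disjoint vertex subsets with d(A_i,A_j) ≥ 1 - λ for all i < j, then there exist subsets A_i' ⊆ A_i with |A_i'| ≥ |A_i|/2 such that for all i < j, every vertex v ∈ A_i' has at most 4kλ|A_j'| inneighbors in A_j', and every vertex v ∈ A_j' has at most 4kλ|A_i'| outneighbors in A_i'. -/

import Mathlib

/-- A tournament: irreflexive, and exactly one direction between distinct vertices. -/
def IsTournament {V : Type*} (r : V → V → Prop) : Prop :=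
  (∀ v, ¬ r v v) ∧ ∀ u v : V, u ≠ v → (r u v ↔ ¬ r v u)

open scoped Classical in
/-- Number of edges directed from `X` to `Y`. -/
noncomputable def eXY {V : Type*} (r : V → V → Prop) (X Y : Finset V) : ℕ :=
  ((X ×ˢ Y).filter (fun p => r p.1 p.2)).card

/-- Directed density from `X` to `Y`. -/
noncomputable def dens {V : Type*} (r : V → V → Prop) (X Y : Finset V) : ℝ :=
  (eXY r X Y : ℝ) / ((X.card : ℝ) * (Y.card : ℝ))

open scoped Classical

lemma eXY_eq_sum {V : Type*} (r : V → V → Prop) (X Y : Finset V) :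
    eXY r X Y = ∑ x ∈ X, (Y.filter (fun y => r x y)).card := by
  unfold eXY
  rw [Finset.card_filter, Finset.sum_product]
  simp only [Finset.card_filter]

lemma eXY_eq_sum' {V : Type*} (r : V → V → Prop) (X Y : Finset V) :
    eXY r X Y = ∑ y ∈ Y, (X.filter (fun x => r x y)).card := by
  rw [eXY_eq_sum]
  simp only [Finset.card_filter]
  exact Finset.sum_comm

lemma eXY_add {V : Type*} {r : V → V → Prop} (hT : IsTournament r)
    {X Y : Finset V} (h : Disjoint X Y) :
    eXY r X Y + eXY r Y X = X.card * Y.card := by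
  rw [eXY_eq_sum, eXY_eq_sum' r Y X]
  simp only [Finset.card_filter]
  rw [← Finset.sum_add_distrib]
  have key : ∀ x ∈ X, ((∑ y ∈ Y, if r x y then 1 else 0) + ∑ y ∈ Y, if r y x then 1 else 0)
      = Y.card := by
    intro x hx
    rw [← Finset.sum_add_distrib, Finset.card_eq_sum_ones]
    refine Finset.sum_congr rfl fun y hy => ?_
    have hxy : x ≠ y := fun hEq => (Finset.disjoint_left.mp h hx (hEq ▸ hy))
    by_cases hr : r x y
    · simp [hr, (hT.2 x y hxy).mp hr]
    · have : r y x := by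
        by_contra h'
        exact hr ((hT.2 x y hxy).mpr h')
      simp [hr, this]
  rw [Finset.sum_congr rfl key]
  simp [mul_comm]

lemma bad_le {V : Type*} (X Y : Finset V) (lam c : ℝ) (hlam : 0 < lam) (hc : 0 < c)
    (deg : V → ℕ)
    (hE : (∑ v ∈ X, (deg v : ℝ)) ≤ lam * X.card * Y.card) :
    ((X.filter (fun v => c * lam * (Y.card : ℝ) < (deg v : ℝ))).card : ℝ) ≤ (X.card : ℝ) / c := by
  set B := X.filter (fun v => c * lam * (Y.card : ℝ) < (deg v : ℝ)) with hB
  by_cases hY : (Y.card : ℝ) = 0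
  · have hB0 : B = ∅ := by
      rw [Finset.eq_empty_iff_forall_notMem]
      intro v hv
      have h1 := (Finset.mem_filter.mp hv).2
      have h2 := (Finset.mem_filter.mp hv).1
      rw [hY, mul_zero] at h1
      have hsum0 : (∑ w ∈ X, (deg w : ℝ)) ≤ 0 := by rw [hY, mul_zero] at hE; exact hE
      have : (deg v : ℝ) ≤ 0 := by
        have := Finset.single_le_sum (f := fun w => (deg w : ℝ))
          (fun w _ => by positivity) h2
        linarith
      linarith
    rw [hB0]
    simp
    positivity
  · have hYpos : (0:ℝ) < Y.card := lt_of_le_of_ne (by positivity) (Ne.symm hY)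
    have h1 : (B.card : ℝ) * (c * lam * Y.card) ≤ ∑ v ∈ B, (deg v : ℝ) := by
      rw [Finset.card_eq_sum_ones B]
      push_cast
      rw [Finset.sum_mul]
      refine Finset.sum_le_sum fun v hv => ?_
      rw [one_mul]
      exact le_of_lt (Finset.mem_filter.mp hv).2
    have h2 : (∑ v ∈ B, (deg v : ℝ)) ≤ ∑ v ∈ X, (deg v : ℝ) :=
      Finset.sum_le_sum_of_subset_of_nonneg (Finset.filter_subset _ _)
        (fun v _ _ => by positivity)
    have h3 : (B.card : ℝ) * (c * lam * Y.card) ≤ lam * X.card * Y.card := by linarith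
    rw [le_div_iff₀ hc]
    have hml := mul_pos hlam hYpos
    nlinarith

lemma wrong_le {V : Type*} {r : V → V → Prop} (hT : IsTournament r)
    {X Y : Finset V} (hd : Disjoint X Y) {lam : ℝ}
    (hdens : 1 - lam ≤ dens r X Y) :
    (eXY r Y X : ℝ) ≤ lam * X.card * Y.card := by
  have hsum := eXY_add hT hd
  by_cases hP : (X.card : ℝ) * (Y.card : ℝ) = 0
  · have h0 : (eXY r Y X : ℝ) ≤ (Y.card : ℝ) * (X.card : ℝ) := by
      have := Finset.card_filter_le ((Y ×ˢ X)) (fun p => r p.1 p.2)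
      have hc : eXY r Y X ≤ Y.card * X.card := by
        unfold eXY; simpa [Finset.card_product] using this
      exact_mod_cast hc
    have hz : lam * (X.card : ℝ) * (Y.card : ℝ) = 0 := by rw [mul_assoc, hP, mul_zero]
    rw [mul_comm] at h0
    rw [hP] at h0
    linarith
  · have hPpos : (0:ℝ) < (X.card : ℝ) * (Y.card : ℝ) := by
      rcases lt_or_eq_of_le (by positivity : (0:ℝ) ≤ (X.card:ℝ)*(Y.card:ℝ)) with h | h
      · exact h
      · exact absurd h.symm hP
    have h1 : (1 - lam) * ((X.card : ℝ) * (Y.card : ℝ)) ≤ (eXY r X Y : ℝ) := by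
      rw [dens] at hdens
      exact (le_div_iff₀ hPpos).mp hdens
    have h2 : (eXY r X Y : ℝ) + (eXY r Y X : ℝ) = (X.card : ℝ) * (Y.card : ℝ) := by
      exact_mod_cast congrArg (Nat.cast (R := ℝ)) hsum
    nlinarith

set_option maxHeartbeats 1000000 in
open scoped Classical in
theorem stmt15 {V : Type} [Fintype V] (r : V → V → Prop) (hT : IsTournament r)
    (k : ℕ) (A : Fin k → Finset V) (lam : ℝ) (hlam : 0 < lam)
    (hdisj : ∀ i j : Fin k, i ≠ j → Disjoint (A i) (A j))
    (hdens : ∀ i j : Fin k, i < j → 1 - lam ≤ dens r (A i) (A j)) :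
    ∃ A' : Fin k → Finset V,
      (∀ i, A' i ⊆ A i ∧ ((A i).card : ℝ) / 2 ≤ ((A' i).card : ℝ)) ∧
      ∀ i j : Fin k, i < j →
        (∀ v ∈ A' i,
          ((((A' j).filter (fun w => r w v)).card : ℝ) ≤
            4 * k * lam * ((A' j).card : ℝ))) ∧
        (∀ v ∈ A' j,
          ((((A' i).filter (fun w => r v w)).card : ℝ) ≤
            4 * k * lam * ((A' i).card : ℝ))) := by
  classical
  rcases Nat.eq_zero_or_pos k with hk0 | hkpos
  · subst hk0
    exact ⟨A, fun i => i.elim0, fun i => i.elim0⟩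
  have hkR : (1:ℝ) ≤ (k:ℝ) := by exact_mod_cast hkpos
  have hc2k : (0:ℝ) < 2 * k := by positivity
  -- degrees
  set indeg : Fin k → V → ℕ := fun j v => ((A j).filter (fun w => r w v)).card with hindeg
  set outdeg : Fin k → V → ℕ := fun j v => ((A j).filter (fun w => r v w)).card with houtdeg
  set good : Fin k → V → Prop := fun i v => ∀ j : Fin k,
    (i < j → (indeg j v : ℝ) ≤ 2 * k * lam * ((A j).card : ℝ)) ∧
    (j < i → (outdeg j v : ℝ) ≤ 2 * k * lam * ((A j).card : ℝ)) with hgood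
  set A' : Fin k → Finset V := fun i => (A i).filter (good i) with hA'
  -- wrong-edge counts
  have hwrong : ∀ i j : Fin k, i < j →
      (eXY r (A j) (A i) : ℝ) ≤ lam * ((A i).card : ℝ) * ((A j).card : ℝ) :=
    fun i j hij => wrong_le hT (hdisj i j hij.ne) (hdens i j hij)
  -- per-pair bad sets
  have hbad_in : ∀ i j : Fin k, i < j →
      (((A i).filter (fun v => 2 * k * lam * ((A j).card : ℝ) < (indeg j v : ℝ))).card : ℝ)
        ≤ ((A i).card : ℝ) / (2 * k) := by
    intro i j hij
    refine bad_le (A i) (A j) lam (2 * k) hlam hc2k (indeg j) ?_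
    have : (∑ v ∈ A i, ((indeg j v : ℝ))) = (eXY r (A j) (A i) : ℝ) := by
      rw [eXY_eq_sum']
      push_cast
      rfl
    rw [this]
    exact hwrong i j hij
  have hbad_out : ∀ i j : Fin k, j < i →
      (((A i).filter (fun v => 2 * k * lam * ((A j).card : ℝ) < (outdeg j v : ℝ))).card : ℝ)
        ≤ ((A i).card : ℝ) / (2 * k) := by
    intro i j hji
    refine bad_le (A i) (A j) lam (2 * k) hlam hc2k (outdeg j) ?_
    have h1 : (∑ v ∈ A i, ((outdeg j v : ℝ))) = (eXY r (A i) (A j) : ℝ) := by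
      rw [eXY_eq_sum]
      push_cast
      rfl
    rw [h1]
    have := wrong_le hT (hdisj j i hji.ne) (hdens j i hji)
    calc (eXY r (A i) (A j) : ℝ) ≤ lam * ((A j).card : ℝ) * ((A i).card : ℝ) := this
      _ = lam * ((A i).card : ℝ) * ((A j).card : ℝ) := by ring
  -- bad sets
  set Bad : Fin k → Fin k → Finset V := fun i j => (A i).filter (fun v =>
    (i < j ∧ 2 * k * lam * ((A j).card : ℝ) < (indeg j v : ℝ)) ∨
    (j < i ∧ 2 * k * lam * ((A j).card : ℝ) < (outdeg j v : ℝ))) with hBad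
  have hBad_le : ∀ i j : Fin k, j ≠ i → ((Bad i j).card : ℝ) ≤ ((A i).card : ℝ) / (2 * k) := by
    intro i j hji
    rcases lt_or_gt_of_ne hji with h | h
    · -- j < i : only outdeg case possible
      refine le_trans ?_ (hbad_out i j h)
      have hsub : Bad i j ⊆ (A i).filter (fun v => 2 * k * lam * ((A j).card : ℝ) < (outdeg j v : ℝ)) := by
        intro v hv
        simp only [hBad, Finset.mem_filter] at hv
        rw [Finset.mem_filter]
        refine ⟨hv.1, ?_⟩
        rcases hv.2 with ⟨h1, _⟩ | ⟨_, h2⟩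
        · exact absurd h1 (asymm h)
        · exact h2
      exact_mod_cast Finset.card_le_card hsub
    · -- i < j
      refine le_trans ?_ (hbad_in i j h)
      have hsub : Bad i j ⊆ (A i).filter (fun v => 2 * k * lam * ((A j).card : ℝ) < (indeg j v : ℝ)) := by
        intro v hv
        simp only [hBad, Finset.mem_filter] at hv
        rw [Finset.mem_filter]
        refine ⟨hv.1, ?_⟩
        rcases hv.2 with ⟨_, h1⟩ | ⟨h2, _⟩
        · exact h1
        · exact absurd h2 (asymm h)
      exact_mod_cast Finset.card_le_card hsub
  have hBad_self : ∀ i : Fin k, Bad i i = ∅ := by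
    intro i
    rw [Finset.eq_empty_iff_forall_notMem]
    intro v hv
    simp only [hBad, Finset.mem_filter] at hv
    rcases hv.2 with ⟨h1, _⟩ | ⟨h1, _⟩ <;> exact lt_irrefl i h1
  -- not-good vertices are in some bad set
  have hsub_bad : ∀ i : Fin k, (A i).filter (fun v => ¬ good i v) ⊆
      Finset.univ.biUnion (Bad i) := by
    intro i v hv
    rw [Finset.mem_filter] at hv
    obtain ⟨hvA, hng⟩ := hv
    simp only [hgood] at hng
    obtain ⟨j, hj⟩ := not_forall.mp hng
    have hj' := not_and_or.mp hj
    rcases hj' with h | h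
    · obtain ⟨hij, hlt⟩ := _root_.not_imp.mp h
      refine Finset.mem_biUnion.mpr ⟨j, Finset.mem_univ j, ?_⟩
      simp only [hBad, Finset.mem_filter]
      exact ⟨hvA, Or.inl ⟨hij, lt_of_not_ge hlt⟩⟩
    · obtain ⟨hij, hlt⟩ := _root_.not_imp.mp h
      refine Finset.mem_biUnion.mpr ⟨j, Finset.mem_univ j, ?_⟩
      simp only [hBad, Finset.mem_filter]
      exact ⟨hvA, Or.inr ⟨hij, lt_of_not_ge hlt⟩⟩
  -- cardinality of A' i
  have hcard : ∀ i : Fin k, ((A i).card : ℝ) / 2 ≤ ((A' i).card : ℝ) := by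
    intro i
    have hsplit : (A' i).card + ((A i).filter (fun v => ¬ good i v)).card = (A i).card :=
      Finset.card_filter_add_card_filter_not (p := good i)
    have hng_le : (((A i).filter (fun v => ¬ good i v)).card : ℝ)
        ≤ ((k:ℝ) - 1) * (((A i).card : ℝ) / (2 * k)) := by
      have h1 : ((A i).filter (fun v => ¬ good i v)).card
          ≤ ∑ j : Fin k, (Bad i j).card :=
        le_trans (Finset.card_le_card (hsub_bad i)) (Finset.card_biUnion_le)
      have h2 : ((∑ j : Fin k, (Bad i j).card : ℕ) : ℝ)
          ≤ ((k:ℝ) - 1) * (((A i).card : ℝ) / (2 * k)) := by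
        push_cast
        rw [← Finset.sum_erase_add _ _ (Finset.mem_univ i)]
        rw [hBad_self i]
        simp only [Finset.card_empty, Nat.cast_zero, add_zero]
        calc (∑ j ∈ Finset.univ.erase i, ((Bad i j).card : ℝ))
            ≤ ∑ j ∈ Finset.univ.erase i, ((A i).card : ℝ) / (2 * k) := by
              refine Finset.sum_le_sum fun j hj => hBad_le i j (Finset.mem_erase.mp hj).1
          _ = ((k:ℝ) - 1) * (((A i).card : ℝ) / (2 * k)) := by
              rw [Finset.sum_const, Finset.card_erase_of_mem (Finset.mem_univ i),
                Finset.card_univ, Fintype.card_fin, nsmul_eq_mul,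
                Nat.cast_sub hkpos]
              push_cast
              ring
      exact le_trans (by exact_mod_cast h1) h2
    have hsplitR : ((A' i).card : ℝ) + (((A i).filter (fun v => ¬ good i v)).card : ℝ)
        = ((A i).card : ℝ) := by exact_mod_cast hsplit
    have hAnn : (0:ℝ) ≤ ((A i).card : ℝ) := by positivity
    have hkne : ((k:ℝ)) ≠ 0 := by positivity
    have hkey : ((k:ℝ) - 1) * (((A i).card : ℝ) / (2 * k)) ≤ ((A i).card : ℝ) / 2 := by
      have hdn : (0:ℝ) ≤ ((A i).card : ℝ) / (2 * k) := div_nonneg hAnn hc2k.le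
      calc ((k:ℝ) - 1) * (((A i).card : ℝ) / (2 * k))
          ≤ (k:ℝ) * (((A i).card : ℝ) / (2 * k)) :=
            mul_le_mul_of_nonneg_right (by linarith) hdn
        _ = ((A i).card : ℝ) / 2 := by field_simp
    linarith
  refine ⟨A', fun i => ⟨Finset.filter_subset _ _, hcard i⟩, ?_⟩
  intro i j hij
  have hjA : ((A j).card : ℝ) ≤ 2 * ((A' j).card : ℝ) := by
    have := hcard j; linarith
  have hiA : ((A i).card : ℝ) ≤ 2 * ((A' i).card : ℝ) := by
    have := hcard i; linarith
  constructor
  · intro v hv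
    have hvg : good i v := (Finset.mem_filter.mp hv).2
    have h1 : (indeg j v : ℝ) ≤ 2 * k * lam * ((A j).card : ℝ) := (hvg j).1 hij
    have hsub : (A' j).filter (fun w => r w v) ⊆ (A j).filter (fun w => r w v) :=
      Finset.filter_subset_filter _ (Finset.filter_subset _ _)
    have h2 : (((A' j).filter (fun w => r w v)).card : ℝ) ≤ (indeg j v : ℝ) := by
      exact_mod_cast Finset.card_le_card hsub
    have h3 : 2 * (k:ℝ) * lam * ((A j).card : ℝ) ≤ 4 * k * lam * ((A' j).card : ℝ) := by
      have hkl : (0:ℝ) ≤ 2 * (k:ℝ) * lam := by positivity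
      nlinarith
    linarith
  · intro v hv
    have hvg : good j v := (Finset.mem_filter.mp hv).2
    have h1 : (outdeg i v : ℝ) ≤ 2 * k * lam * ((A i).card : ℝ) := (hvg i).2 hij
    have hsub : (A' i).filter (fun w => r v w) ⊆ (A i).filter (fun w => r v w) :=
      Finset.filter_subset_filter _ (Finset.filter_subset _ _)
    have h2 : (((A' i).filter (fun w => r v w)).card : ℝ) ≤ (outdeg i v : ℝ) := by
      exact_mod_cast Finset.card_le_card hsub
    have h3 : 2 * (k:ℝ) * lam * ((A i).card : ℝ) ≤ 4 * k * lam * ((A' i).card : ℝ) := by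
      have hkl : (0:ℝ) ≤ 2 * (k:ℝ) * lam := by positivity
      nlinarith
    linarith
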